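/- Let P : ℝ^n → Sym(n,ℝ) be C^1 with p·I ≤ P(x) ≤ q·I for 0 < p ≤ q, and let f : ℝ^n → ℝ^n be C^1. Suppose there is a symmetric positive definite Q with (d/dt) P(X(x,t))|_{t=0} + P(x)·Df(x) + Df(x)ᵀ·P(x) ≤ -Q for all x, where X is the flow of f. Then for every solution v(t) of the variational equation v' = Df(X(x,t))·v, the function W(t) = v(t)ᵀ P(X(x,t)) v(t) satisfies W'(t) ≤ -(λ_min(Q)/q)·W(t), and hence |v(t)| ≤ √(q/p)·e^{-λ_min(Q) t/(2q)}·|v(0)| for all t ≥ 0. -/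

import Mathlib

/-- Contraction along the flow: if `𝔡_f P + P Df + Dfᵀ P ≤ -Q`, then along any solution `v` of
the variational equation, `W(t) = v(t)ᵀ P(X(x,t)) v(t)` satisfies `W' ≤ -(λ_min(Q)/q) W`, hence
`|v(t)| ≤ √(q/p) e^{-λ_min(Q) t/(2q)} |v(0)|`. -/
theorem stmt14 {n : ℕ} (p q qm : ℝ) (hp : 0 < p) (hpq : p ≤ q) (hqm : 0 < qm)
    (f : EuclideanSpace ℝ (Fin n) → EuclideanSpace ℝ (Fin n)) (hf : ContDiff ℝ 1 f)
    (P : EuclideanSpace ℝ (Fin n) → EuclideanSpace ℝ (Fin n) →L[ℝ] EuclideanSpace ℝ (Fin n))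
    (hP : ContDiff ℝ 1 P)
    (hPsym : ∀ x u v', (inner ℝ (P x u) v' : ℝ) = (inner ℝ u (P x v') : ℝ))
    (hPlow : ∀ x v', p * ‖v'‖ ^ 2 ≤ (inner ℝ v' (P x v') : ℝ))
    (hPhigh : ∀ x v', (inner ℝ v' (P x v') : ℝ) ≤ q * ‖v'‖ ^ 2)
    (X : EuclideanSpace ℝ (Fin n) → ℝ → EuclideanSpace ℝ (Fin n))
    (hX0 : ∀ x, X x 0 = x) (hX : ∀ x t, HasDerivAt (X x) (f (X x t)) t)
    (Q : EuclideanSpace ℝ (Fin n) →L[ℝ] EuclideanSpace ℝ (Fin n))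
    (hQsym : ∀ u v', (inner ℝ (Q u) v' : ℝ) = (inner ℝ u (Q v') : ℝ))
    (hQlow : ∀ v', qm * ‖v'‖ ^ 2 ≤ (inner ℝ v' (Q v') : ℝ))
    (hLyap : ∀ x v', deriv (fun t => (inner ℝ v' (P (X x t) v') : ℝ)) 0
        + 2 * (inner ℝ v' (P x (fderiv ℝ f x v')) : ℝ) ≤ -(inner ℝ v' (Q v') : ℝ))
    (x : EuclideanSpace ℝ (Fin n)) (v : ℝ → EuclideanSpace ℝ (Fin n))
    (hv : ∀ t, HasDerivAt v (fderiv ℝ f (X x t) (v t)) t) :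
    (∀ t ≥ (0:ℝ), deriv (fun s => (inner ℝ (v s) (P (X x s) (v s)) : ℝ)) t
        ≤ -(qm / q) * (inner ℝ (v t) (P (X x t) (v t)) : ℝ)) ∧
    (∀ t ≥ (0:ℝ), ‖v t‖ ≤ Real.sqrt (q / p) * Real.exp (-(qm * t) / (2 * q)) * ‖v 0‖) := by
  have hq : 0 < q := lt_of_lt_of_le hp hpq
  have hPd : Differentiable ℝ P := hP.differentiable one_ne_zero
  set c : ℝ := qm / q with hc
  have hc0 : 0 < c := div_pos hqm hq
  set W : ℝ → ℝ := fun s => (inner ℝ (v s) (P (X x s) (v s)) : ℝ) with hWdef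
  -- derivative of W
  have hWd : ∀ t, HasDerivAt W
      ((inner ℝ (v t) ((fderiv ℝ P (X x t) (f (X x t))) (v t)
          + P (X x t) (fderiv ℝ f (X x t) (v t))) : ℝ)
        + (inner ℝ (fderiv ℝ f (X x t) (v t)) (P (X x t) (v t)) : ℝ)) t := by
    intro t
    have h1 : HasDerivAt (fun s => P (X x s)) (fderiv ℝ P (X x t) (f (X x t))) t :=
      (hPd (X x t)).hasFDerivAt.comp_hasDerivAt t (hX x t)
    have h2 := h1.clm_apply (hv t)
    exact (hv t).inner ℝ h2
  -- identify the Lyapunov deriv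
  have hDer0 : ∀ t, deriv (fun s => (inner ℝ (v t) (P (X (X x t) s) (v t)) : ℝ)) 0
      = (inner ℝ (v t) ((fderiv ℝ P (X x t) (f (X x t))) (v t)) : ℝ) := by
    intro t
    have h1 : HasDerivAt (fun s => P (X (X x t) s))
        (fderiv ℝ P (X (X x t) 0) (f (X (X x t) 0))) 0 :=
      (hPd (X (X x t) 0)).hasFDerivAt.comp_hasDerivAt 0 (hX (X x t) 0)
    rw [hX0] at h1
    have h2 := h1.clm_apply (hasDerivAt_const (0:ℝ) (v t))
    have h3 := (hasDerivAt_const (0:ℝ) (v t)).inner ℝ h2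
    simp only [map_zero, add_zero, inner_zero_left, hX0] at h3
    exact h3.deriv
  -- main differential inequality
  have key : ∀ t, deriv W t ≤ -c * W t := by
    intro t
    rw [(hWd t).deriv]
    have hL := hLyap (X x t) (v t)
    rw [hDer0 t] at hL
    have hsymm : (inner ℝ (fderiv ℝ f (X x t) (v t)) (P (X x t) (v t)) : ℝ)
        = (inner ℝ (v t) (P (X x t) (fderiv ℝ f (X x t) (v t))) : ℝ) := by
      rw [real_inner_comm, hPsym]
    rw [inner_add_right, hsymm]
    have hQ := hQlow (v t)
    have hup := hPhigh (X x t) (v t)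
    have hWt : W t = (inner ℝ (v t) (P (X x t) (v t)) : ℝ) := rfl
    rw [hWt]
    have hcq : c * q = qm := by rw [hc]; exact div_mul_cancel₀ qm hq.ne'
    nlinarith [hc0.le, mul_le_mul_of_nonneg_left hup hc0.le]
  constructor
  · intro t _
    exact key t
  · -- Gronwall
    have hWdiff : Differentiable ℝ W := fun t => (hWd t).differentiableAt
    have hanti : Antitone (fun t => W t * Real.exp (c * t)) := by
      apply antitone_of_deriv_nonpos
      · exact hWdiff.mul (Real.differentiable_exp.comp (differentiable_id.const_mul c))
      · intro t
        have he : HasDerivAt (fun t => Real.exp (c * t)) (Real.exp (c * t) * c) t := by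
          simpa using ((hasDerivAt_id t).const_mul c).exp
        have hprod := (hWdiff t).hasDerivAt.mul he
        rw [show (fun t => W t * Real.exp (c * t)) = (W * fun t => Real.exp (c * t)) from rfl, hprod.deriv]
        have := key t
        nlinarith [Real.exp_pos (c * t), mul_le_mul_of_nonneg_right this (Real.exp_pos (c*t)).le]
    intro t ht
    have h1 : W t * Real.exp (c * t) ≤ W 0 * Real.exp (c * 0) := hanti ht
    rw [mul_zero, Real.exp_zero, mul_one] at h1
    have hlow := hPlow (X x t) (v t)
    have hW0 : W 0 ≤ q * ‖v 0‖ ^ 2 := by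
      have := hPhigh (X x 0) (v 0); simpa using this
    have hWtl : p * ‖v t‖ ^ 2 ≤ W t := hlow
    have hexp : (0:ℝ) < Real.exp (c * t) := Real.exp_pos _
    -- ‖v t‖^2 ≤ (q/p) * exp (-c t) * ‖v 0‖^2 route via squares
    have hsq : ‖v t‖ ^ 2 ≤ (Real.sqrt (q / p) * Real.exp (-(qm * t) / (2 * q)) * ‖v 0‖) ^ 2 := by
      have hs : Real.sqrt (q / p) ^ 2 = q / p := Real.sq_sqrt (by positivity)
      have he2 : Real.exp (-(qm * t) / (2 * q)) ^ 2 = Real.exp (-(c * t)) := by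
        rw [← Real.exp_nat_mul]
        congr 1
        push_cast
        field_simp [hc]
        have hcq' : c * q = qm := by rw [hc]; exact div_mul_cancel₀ qm hq.ne'
        rw [mul_assoc, mul_comm q c, hcq']; ring
      rw [mul_pow, mul_pow, hs, he2, div_mul_eq_mul_div, div_mul_eq_mul_div,
        le_div_iff₀ hp]
      have hprod : Real.exp (c * t) * Real.exp (-(c * t)) = 1 := by
        rw [← Real.exp_add]; simp
      have h2 : W t ≤ W 0 * Real.exp (-(c * t)) := by
        calc W t = W t * Real.exp (c * t) * Real.exp (-(c * t)) := by
              rw [mul_assoc, hprod, mul_one]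
          _ ≤ W 0 * Real.exp (-(c * t)) :=
              mul_le_mul_of_nonneg_right h1 (Real.exp_pos _).le
      have h3 : W 0 * Real.exp (-(c * t)) ≤ q * ‖v 0‖ ^ 2 * Real.exp (-(c * t)) :=
        mul_le_mul_of_nonneg_right hW0 (Real.exp_pos _).le
      nlinarith [hWtl, h2, h3]
    calc ‖v t‖ = Real.sqrt (‖v t‖ ^ 2) := (Real.sqrt_sq (norm_nonneg _)).symm
      _ ≤ Real.sqrt ((Real.sqrt (q / p) * Real.exp (-(qm * t) / (2 * q)) * ‖v 0‖) ^ 2) :=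
          Real.sqrt_le_sqrt hsq
      _ = _ := Real.sqrt_sq (by positivity)
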